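/- arXiv:1505.01958 — 9 statements merged into one kernel-verified Lean document; each statement's English description precedes it below -/
import Mathlib

section
/- Suppose that for every complex number λ with |λ| ≥ 1 the (n+n_y)×(n+n_f) Rosenbrock block matrix [[Φ − λI, Ẽ],[C, G]] has rank n + n_f (i.e. the fault subsystem (Φ, Ẽ, C, G) has no unstable invariant zeros). Then for every complex number λ with |λ| ≥ 1 the (n+n_y)×n stacked matrix [[Φ₁ − λI],[C₂]] has rank n; that is, the pair (Φ₁, C₂) passes the PBH test for stabilizability by output injection. -/
open Matrix

lemma rank_eq_card_iff_inj {m p : Type*} [Fintype m] [Fintype p] [DecidableEq m]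
    (A : Matrix p m ℂ) :
    A.rank = Fintype.card m ↔ ∀ v : m → ℂ, A.mulVec v = 0 → v = 0 := by
  have hrn := LinearMap.finrank_range_add_finrank_ker A.mulVecLin
  have hdom : Module.finrank ℂ (m → ℂ) = Fintype.card m := Module.finrank_pi ℂ
  rw [hdom] at hrn
  constructor
  · intro h v hv
    have hker : Module.finrank ℂ (LinearMap.ker A.mulVecLin) = 0 := by
      unfold Matrix.rank at h; omega
    have : LinearMap.ker A.mulVecLin = ⊥ :=
      Submodule.finrank_eq_zero.mp hker
    have hv' : v ∈ LinearMap.ker A.mulVecLin := by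
      simpa [Matrix.mulVecLin_apply] using hv
    simpa [this] using hv'
  · intro h
    have hker : LinearMap.ker A.mulVecLin = ⊥ := by
      rw [LinearMap.ker_eq_bot']
      intro v hv
      exact h v (by simpa [Matrix.mulVecLin_apply] using hv)
    have : Module.finrank ℂ (LinearMap.ker A.mulVecLin) = 0 := by
      rw [hker]; simp
    unfold Matrix.rank; omega

/-- **PBH stabilizability of (Φ₁, C₂).**
If the Rosenbrock matrix of the fault subsystem (Φ, Ẽ, C, G) has full column rank
n + n_f for every λ with |λ| ≥ 1 (no unstable invariant zeros), then the stacked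
matrix [[Φ₁ − λI],[C₂]] has rank n for every λ with |λ| ≥ 1. -/
theorem stmt0 (n nf ny : ℕ) (hn : 0 < n) (hnf : 0 < nf) (hny : 0 < ny)
    (Φ : Matrix (Fin n) (Fin n) ℂ) (E : Matrix (Fin n) (Fin nf) ℂ)
    (C : Matrix (Fin ny) (Fin n) ℂ) (G : Matrix (Fin ny) (Fin nf) ℂ)
    (Ginv : Matrix (Fin nf) (Fin ny) ℂ) (hG : Ginv * G = 1)
    (hzeros : ∀ z : ℂ, 1 ≤ ‖z‖ →
      (Matrix.fromBlocks (Φ - z • (1 : Matrix (Fin n) (Fin n) ℂ)) E C G).rank = n + nf) :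
    ∀ z : ℂ, 1 ≤ ‖z‖ →
      (Matrix.fromRows
        ((Φ - E * Ginv * C) - z • (1 : Matrix (Fin n) (Fin n) ℂ))
        (((1 : Matrix (Fin ny) (Fin ny) ℂ) - G * Ginv) * C)).rank = n := by
  intro z hz
  have hR := hzeros z hz
  rw [show n + nf = Fintype.card (Fin n ⊕ Fin nf) by simp] at hR
  rw [rank_eq_card_iff_inj] at hR
  have goal : ∀ x : Fin n → ℂ,
      (Matrix.fromRows
        ((Φ - E * Ginv * C) - z • (1 : Matrix (Fin n) (Fin n) ℂ))
        (((1 : Matrix (Fin ny) (Fin ny) ℂ) - G * Ginv) * C)).mulVec x = 0 → x = 0 := by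
    intro x hx
    rw [Matrix.fromRows_mulVec] at hx
    have h1 : ((Φ - E * Ginv * C) - z • (1 : Matrix (Fin n) (Fin n) ℂ)).mulVec x = 0 :=
      funext fun i => congrFun hx (Sum.inl i)
    have h2 : (((1 : Matrix (Fin ny) (Fin ny) ℂ) - G * Ginv) * C).mulVec x = 0 :=
      funext fun i => congrFun hx (Sum.inr i)
    set u : Fin nf → ℂ := -(Ginv * C).mulVec x with hu
    have key : (Matrix.fromBlocks (Φ - z • (1 : Matrix (Fin n) (Fin n) ℂ)) E C G).mulVec
        (Sum.elim x u) = 0 := by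
      rw [Matrix.fromBlocks_mulVec]
      have ht : (Φ - z • (1 : Matrix (Fin n) (Fin n) ℂ)).mulVec x + E.mulVec u = 0 := by
        have h := h1
        simp only [hu, Matrix.sub_mulVec, Matrix.mulVec_neg,
          ← Matrix.mulVec_mulVec, Matrix.mul_assoc] at h ⊢
        linear_combination (norm := module) h
      have hb : C.mulVec x + G.mulVec u = 0 := by
        have h := h2
        simp only [hu, Matrix.sub_mul, Matrix.one_mul, Matrix.sub_mulVec, Matrix.mulVec_neg,
          ← Matrix.mulVec_mulVec, Matrix.mul_assoc] at h ⊢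
        linear_combination (norm := module) h
      simp only [Sum.elim_comp_inl, Sum.elim_comp_inr]
      rw [ht, hb]
      ext (i | i) <;> simp
    have := hR _ key
    funext i
    exact congrFun this (Sum.inl i)
  have := (rank_eq_card_iff_inj _).mpr goal
  simpa using this
end

section
/- For every complex number λ, the rank of the block matrix [[Φ₁ − λI, Ẽ],[C₂, G]] equals the rank of the block matrix [[Φ − λI, Ẽ],[C, G]]. -/
/-- **Rank invariance under the block transformation.**
For every λ, rank [[Φ₁ − λI, Ẽ],[C₂, G]] = rank [[Φ − λI, Ẽ],[C, G]]. -/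
theorem stmt2 (n nf ny : ℕ) (hn : 0 < n) (hnf : 0 < nf) (hny : 0 < ny)
    (Φ : Matrix (Fin n) (Fin n) ℂ) (E : Matrix (Fin n) (Fin nf) ℂ)
    (C : Matrix (Fin ny) (Fin n) ℂ) (G : Matrix (Fin ny) (Fin nf) ℂ)
    (Ginv : Matrix (Fin nf) (Fin ny) ℂ) (hG : Ginv * G = 1) :
    ∀ z : ℂ,
      (Matrix.fromBlocks
        ((Φ - E * Ginv * C) - z • (1 : Matrix (Fin n) (Fin n) ℂ)) E
        (((1 : Matrix (Fin ny) (Fin ny) ℂ) - G * Ginv) * C) G).rank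
      =
      (Matrix.fromBlocks (Φ - z • (1 : Matrix (Fin n) (Fin n) ℂ)) E C G).rank := by
  intro z
  have key :
      Matrix.fromBlocks
        ((Φ - E * Ginv * C) - z • (1 : Matrix (Fin n) (Fin n) ℂ)) E
        (((1 : Matrix (Fin ny) (Fin ny) ℂ) - G * Ginv) * C) G
      =
      Matrix.fromBlocks (Φ - z • (1 : Matrix (Fin n) (Fin n) ℂ)) E C G *
        Matrix.fromBlocks (1 : Matrix (Fin n) (Fin n) ℂ) 0 (-(Ginv * C))
          (1 : Matrix (Fin nf) (Fin nf) ℂ) := by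
    rw [Matrix.fromBlocks_multiply]
    congr 1 <;>
      simp [Matrix.sub_mul, Matrix.mul_neg, Matrix.mul_assoc] <;> abel_nf <;> simp
  rw [key]
  apply Matrix.rank_mul_eq_left_of_isUnit_det
  rw [Matrix.det_fromBlocks_zero₁₂]
  simp
end

section
/- Suppose the sequences x̃ : ℕ → ℝⁿ, f : ℕ → ℝ^{n_f}, r, e : ℕ → ℝ^{n_y} satisfy for all k the residual dynamics x̃(k+1) = Φx̃(k) + Ẽf(k) and r(k) = Cx̃(k) + Gf(k) + e(k), and the sequences x_r : ℕ → ℝⁿ, f̂ : ℕ → ℝ^{n_f} satisfy the closed-loop left inverse equations x_r(k+1) = Φ₂x_r(k) + B₂r(k) and f̂(k) = C₁x_r(k) + D₁r(k). Then the errors x̃_r(k) := x̃(k) − x_r(k) and f̃(k) := f(k) − f̂(k) satisfy for all k: x̃_r(k+1) = (Φ₁ − K_rC₂)x̃_r(k) − B₂e(k) and f̃(k) = C₁x̃_r(k) − D₁e(k). -/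
open Matrix

/-- **Fault estimation error dynamics of the closed-loop left inverse.** -/
theorem stmt5 (n nf ny : ℕ) (hn : 0 < n) (hnf : 0 < nf) (hny : 0 < ny)
    (Φ : Matrix (Fin n) (Fin n) ℝ) (E : Matrix (Fin n) (Fin nf) ℝ)
    (C : Matrix (Fin ny) (Fin n) ℝ) (G : Matrix (Fin ny) (Fin nf) ℝ)
    (Ginv : Matrix (Fin nf) (Fin ny) ℝ) (hG : Ginv * G = 1)
    (Kr : Matrix (Fin n) (Fin ny) ℝ)
    -- definitions of the closed-loop left inverse matrices
    (Φ₁ : Matrix (Fin n) (Fin n) ℝ) (hΦ₁ : Φ₁ = Φ - E * Ginv * C)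
    (B₁ : Matrix (Fin n) (Fin ny) ℝ) (hB₁ : B₁ = E * Ginv)
    (C₁ : Matrix (Fin nf) (Fin n) ℝ) (hC₁ : C₁ = -(Ginv * C))
    (D₁ : Matrix (Fin nf) (Fin ny) ℝ) (hD₁ : D₁ = Ginv)
    (C₂ : Matrix (Fin ny) (Fin n) ℝ) (hC₂ : C₂ = ((1 : Matrix (Fin ny) (Fin ny) ℝ) - G * Ginv) * C)
    (D₂ : Matrix (Fin ny) (Fin ny) ℝ) (hD₂ : D₂ = G * Ginv)
    (Φ₂ : Matrix (Fin n) (Fin n) ℝ) (hΦ₂ : Φ₂ = Φ₁ - Kr * C₂)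
    (B₂ : Matrix (Fin n) (Fin ny) ℝ) (hB₂ : B₂ = B₁ + Kr * ((1 : Matrix (Fin ny) (Fin ny) ℝ) - D₂))
    (xt : ℕ → Fin n → ℝ) (f : ℕ → Fin nf → ℝ) (r e : ℕ → Fin ny → ℝ)
    (xr : ℕ → Fin n → ℝ) (fhat : ℕ → Fin nf → ℝ)
    (hx : ∀ k, xt (k + 1) = Φ *ᵥ xt k + E *ᵥ f k)
    (hr : ∀ k, r k = C *ᵥ xt k + G *ᵥ f k + e k)
    (hxr : ∀ k, xr (k + 1) = Φ₂ *ᵥ xr k + B₂ *ᵥ r k)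
    (hfhat : ∀ k, fhat k = C₁ *ᵥ xr k + D₁ *ᵥ r k) :
    ∀ k, (xt (k + 1) - xr (k + 1) = (Φ₁ - Kr * C₂) *ᵥ (xt k - xr k) - B₂ *ᵥ e k) ∧
      (f k - fhat k = C₁ *ᵥ (xt k - xr k) - D₁ *ᵥ e k) := by
  have h1 : ∀ v, Ginv *ᵥ (G *ᵥ v) = v := fun v => by
    rw [Matrix.mulVec_mulVec, hG, Matrix.one_mulVec]
  subst hΦ₁ hB₁ hC₁ hD₁ hC₂ hD₂ hΦ₂ hB₂
  intro k
  constructor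
  · rw [hx, hxr, hr]
    simp only [Matrix.mulVec_add, Matrix.add_mulVec, Matrix.sub_mulVec,
      Matrix.neg_mulVec, Matrix.one_mulVec, Matrix.mulVec_sub, ← Matrix.mulVec_mulVec, h1]
    abel
  · rw [hfhat, hr]
    simp only [Matrix.mulVec_add, Matrix.add_mulVec, Matrix.sub_mulVec,
      Matrix.neg_mulVec, Matrix.one_mulVec, Matrix.mulVec_sub, ← Matrix.mulVec_mulVec, h1]
    abel
end

section
/- Suppose the sequences u : ℕ → ℝ^{n_u}, y, r : ℕ → ℝ^{n_y}, x̂, x_r : ℕ → ℝⁿ, f̂ : ℕ → ℝ^{n_f} satisfy for all k: x̂(k+1) = Φx̂(k) + B̃u(k) + Ky(k), r(k) = y(k) − Cx̂(k) − Du(k), x_r(k+1) = Φ₂x_r(k) + B₂r(k), and f̂(k) = C₁x_r(k) + D₁r(k). Then the sequence x_f(k) := x_r(k) + x̂(k) satisfies for all k: x_f(k+1) = (Φ₁ − K_rC₂)x_f(k) + (B_f − K_rD_{f,2})u(k) + (K_f + K_rG_{f,2})y(k) and f̂(k) = C₁x_f(k) + D_{f,1}u(k) + D₁y(k), where B_f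 = B̃ − ẼG⁻D, K_f = K + ẼG⁻, D_{f,1} = −G⁻D, D_{f,2} = (I − GG⁻)D, G_{f,2} = I − GG⁻. -/
open Matrix

/-- **Reduced-order fault estimation filter.**
Cascading the residual generator and the closed-loop left inverse, the state
x_f(k) = x_r(k) + x̂(k) satisfies the reduced filter recursion. -/
theorem stmt6 (n nu nf ny : ℕ) (hn : 0 < n) (hnu : 0 < nu) (hnf : 0 < nf) (hny : 0 < ny)
    (Φ : Matrix (Fin n) (Fin n) ℝ) (Bt : Matrix (Fin n) (Fin nu) ℝ)
    (E : Matrix (Fin n) (Fin nf) ℝ) (K : Matrix (Fin n) (Fin ny) ℝ)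
    (C : Matrix (Fin ny) (Fin n) ℝ) (D : Matrix (Fin ny) (Fin nu) ℝ)
    (G : Matrix (Fin ny) (Fin nf) ℝ)
    (Ginv : Matrix (Fin nf) (Fin ny) ℝ) (hG : Ginv * G = 1)
    (Kr : Matrix (Fin n) (Fin ny) ℝ)
    (Φ₁ : Matrix (Fin n) (Fin n) ℝ) (hΦ₁ : Φ₁ = Φ - E * Ginv * C)
    (B₁ : Matrix (Fin n) (Fin ny) ℝ) (hB₁ : B₁ = E * Ginv)
    (C₁ : Matrix (Fin nf) (Fin n) ℝ) (hC₁ : C₁ = -(Ginv * C))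
    (D₁ : Matrix (Fin nf) (Fin ny) ℝ) (hD₁ : D₁ = Ginv)
    (C₂ : Matrix (Fin ny) (Fin n) ℝ) (hC₂ : C₂ = ((1 : Matrix (Fin ny) (Fin ny) ℝ) - G * Ginv) * C)
    (D₂ : Matrix (Fin ny) (Fin ny) ℝ) (hD₂ : D₂ = G * Ginv)
    (Φ₂ : Matrix (Fin n) (Fin n) ℝ) (hΦ₂ : Φ₂ = Φ₁ - Kr * C₂)
    (B₂ : Matrix (Fin n) (Fin ny) ℝ) (hB₂ : B₂ = B₁ + Kr * ((1 : Matrix (Fin ny) (Fin ny) ℝ) - D₂))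
    (Bf : Matrix (Fin n) (Fin nu) ℝ) (hBf : Bf = Bt - E * Ginv * D)
    (Kf : Matrix (Fin n) (Fin ny) ℝ) (hKf : Kf = K + E * Ginv)
    (Df1 : Matrix (Fin nf) (Fin nu) ℝ) (hDf1 : Df1 = -(Ginv * D))
    (Df2 : Matrix (Fin ny) (Fin nu) ℝ)
    (hDf2 : Df2 = ((1 : Matrix (Fin ny) (Fin ny) ℝ) - G * Ginv) * D)
    (Gf2 : Matrix (Fin ny) (Fin ny) ℝ)
    (hGf2 : Gf2 = (1 : Matrix (Fin ny) (Fin ny) ℝ) - G * Ginv)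
    (u : ℕ → Fin nu → ℝ) (y r : ℕ → Fin ny → ℝ)
    (xhat xr : ℕ → Fin n → ℝ) (fhat : ℕ → Fin nf → ℝ)
    (hxhat : ∀ k, xhat (k + 1) = Φ *ᵥ xhat k + Bt *ᵥ u k + K *ᵥ y k)
    (hr : ∀ k, r k = y k - C *ᵥ xhat k - D *ᵥ u k)
    (hxr : ∀ k, xr (k + 1) = Φ₂ *ᵥ xr k + B₂ *ᵥ r k)
    (hfhat : ∀ k, fhat k = C₁ *ᵥ xr k + D₁ *ᵥ r k) :
    ∀ k, (xr (k + 1) + xhat (k + 1) =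
        (Φ₁ - Kr * C₂) *ᵥ (xr k + xhat k) + (Bf - Kr * Df2) *ᵥ u k
          + (Kf + Kr * Gf2) *ᵥ y k) ∧
      (fhat k = C₁ *ᵥ (xr k + xhat k) + Df1 *ᵥ u k + D₁ *ᵥ y k) := by
  subst hΦ₁ hB₁ hC₁ hD₁ hC₂ hD₂ hΦ₂ hB₂ hBf hKf hDf1 hDf2 hGf2
  intro k
  constructor <;>
  · simp only [hxhat, hxr, hr, hfhat, Matrix.add_mulVec, Matrix.sub_mulVec,
      Matrix.mulVec_add, Matrix.mulVec_sub, Matrix.neg_mulVec, ← Matrix.mulVec_mulVec,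
      Matrix.one_mulVec, Matrix.mul_assoc, Matrix.mul_sub, Matrix.mul_one, Matrix.mul_neg,
      Matrix.sub_mul, Matrix.one_mul, Matrix.neg_mul]
    abel
end

section
/- For every L ≥ 1, the block Toeplitz matrix of the open-loop left inverse is a left inverse of the block Toeplitz matrix of the fault subsystem: T_L(Φ₁, B₁, C₁, D₁) · T_L(Φ, Ẽ, C, G) = I (the Ln_f × Ln_f identity matrix). -/
open Matrix

/-- Block lower-triangular Toeplitz matrix `T_L(A,B,C,D)` of the Markov parameters
of the system `(A,B,C,D)`. -/
def TL {α m p : Type*} [Fintype α] [DecidableEq α] (L : ℕ)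
    (A : Matrix α α ℝ) (B : Matrix α m ℝ) (C : Matrix p α ℝ) (D : Matrix p m ℝ) :
    Matrix (Fin L × p) (Fin L × m) ℝ :=
  Matrix.of fun ip jq =>
    if (ip.1 : ℕ) = (jq.1 : ℕ) then D ip.2 jq.2
    else if (jq.1 : ℕ) < (ip.1 : ℕ) then
      (C * A ^ ((ip.1 : ℕ) - (jq.1 : ℕ) - 1) * B) ip.2 jq.2
    else 0

lemma TL_apply {α m p : Type*} [Fintype α] [DecidableEq α] (L : ℕ)
    (A : Matrix α α ℝ) (B : Matrix α m ℝ) (C : Matrix p α ℝ) (D : Matrix p m ℝ)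
    (ip : Fin L × p) (jq : Fin L × m) :
    TL L A B C D ip jq =
      (if (ip.1 : ℕ) = (jq.1 : ℕ) then D
        else if (jq.1 : ℕ) < (ip.1 : ℕ) then C * A ^ ((ip.1 : ℕ) - (jq.1 : ℕ) - 1) * B
        else 0) ip.2 jq.2 := by
  unfold TL
  rw [Matrix.of_apply]
  split_ifs <;> simp


lemma key {α : Type*} [Fintype α] [DecidableEq α] (X Y : Matrix α α ℝ) :
    ∀ s : ℕ, (X + Y) ^ s = X ^ s + ∑ k ∈ Finset.range s, X ^ (s - 1 - k) * Y * (X + Y) ^ k := by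
  intro s
  induction s with
  | zero => simp
  | succ s ih =>
    rw [pow_succ' (X + Y) s, Finset.sum_range_succ, ih]
    have hX : ∑ k ∈ Finset.range s, X ^ (s + 1 - 1 - k) * Y * (X + Y) ^ k
        = X * ∑ k ∈ Finset.range s, X ^ (s - 1 - k) * Y * (X + Y) ^ k := by
      rw [Finset.mul_sum]
      refine Finset.sum_congr rfl fun k hk => ?_
      have hk' : k < s := Finset.mem_range.mp hk
      have h : s + 1 - 1 - k = (s - 1 - k) + 1 := by omega
      rw [h, pow_succ']
      simp [mul_assoc]
    rw [hX]
    have h2 : s + 1 - 1 - s = 0 := by omega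
    rw [h2, pow_zero, one_mul]
    simp only [add_mul, mul_add, pow_succ']
    abel

set_option maxHeartbeats 1000000 in
lemma blocksum {n nf ny : ℕ}
    (Φ : Matrix (Fin n) (Fin n) ℝ) (E : Matrix (Fin n) (Fin nf) ℝ)
    (C : Matrix (Fin ny) (Fin n) ℝ) (G : Matrix (Fin ny) (Fin nf) ℝ)
    (Ginv : Matrix (Fin nf) (Fin ny) ℝ) (hG : Ginv * G = 1)
    (L i j : ℕ) (hi : i < L) (hj : j < L) :
    ∑ l ∈ Finset.range L,
      (if i = l then Ginv
        else if l < i then (-(Ginv * C)) * (Φ - E * Ginv * C) ^ (i - l - 1) * (E * Ginv) else 0) *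
      (if l = j then G else if j < l then C * Φ ^ (l - j - 1) * E else 0)
      = if i = j then (1 : Matrix (Fin nf) (Fin nf) ℝ) else 0 := by
  set Φ₁ := Φ - E * Ginv * C with hΦ₁
  rcases lt_trichotomy i j with hij | hij | hij
  · rw [if_neg (by omega)]
    refine Finset.sum_eq_zero fun l _ => ?_
    split_ifs <;> (try simp) <;> omega
  · subst hij
    rw [if_pos rfl]
    rw [Finset.sum_eq_single i]
    · rw [if_pos rfl, if_pos rfl, hG]
    · intro l _ hl
      split_ifs <;> (try simp) <;> omega
    · intro h; exact absurd (Finset.mem_range.mpr hi) h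
  · -- main case j < i
    rw [if_neg (by omega)]
    obtain ⟨s, rfl⟩ : ∃ s, i = j + s + 1 := ⟨i - j - 1, by omega⟩
    set f : ℕ → Matrix (Fin nf) (Fin nf) ℝ := fun l =>
      (if j + s + 1 = l then Ginv
        else if l < j + s + 1 then
          (-(Ginv * C)) * Φ₁ ^ (j + s + 1 - l - 1) * (E * Ginv) else 0) *
      (if l = j then G else if j < l then C * Φ ^ (l - j - 1) * E else 0) with hf
    have hsub : ∑ l ∈ Finset.range L, f l = ∑ l ∈ Finset.Icc j (j + s + 1), f l := by
      refine (Finset.sum_subset (fun l hl => Finset.mem_range.mpr ?_) fun l hl hl' => ?_).symm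
      · have := Finset.mem_Icc.mp hl; omega
      · rw [Finset.mem_Icc, not_and_or, not_le, not_le] at hl'
        simp only [hf]
        split_ifs <;> (try simp) <;> omega
    rw [hsub, show Finset.Icc j (j + s + 1) = Finset.Ico j (j + s + 1 + 1) from
      (Finset.Ico_add_one_right_eq_Icc _ _).symm, Finset.sum_Ico_eq_sum_range]
    have hrange : j + s + 1 + 1 - j = s + 1 + 1 := by omega
    rw [hrange, Finset.sum_range_succ, Finset.sum_range_succ']
    have hlast : f (j + (s + 1)) = Ginv * (C * (Φ ^ s * E)) := by
      simp only [hf]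
      rw [if_pos (by omega), if_neg (by omega), if_pos (by omega)]
      rw [show j + (s + 1) - j - 1 = s from by omega]
      simp only [Matrix.mul_assoc]
    have h0 : f (j + 0) = -(Ginv * (C * (Φ₁ ^ s * E))) := by
      simp only [hf]
      rw [if_neg (by omega), if_pos (by omega), if_pos (by omega)]
      rw [show j + s + 1 - (j + 0) - 1 = s from by omega]
      simp only [Matrix.neg_mul, Matrix.mul_assoc, hG, Matrix.mul_one]
    have hterm : ∀ k ∈ Finset.range s, f (j + (k + 1)) =
        -(Ginv * (C * (Φ₁ ^ (s - 1 - k) * ((E * Ginv) * C) * (Φ ^ k * E)))) := by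
      intro k hk
      have hk' : k < s := Finset.mem_range.mp hk
      simp only [hf]
      rw [if_neg (by omega), if_pos (by omega), if_neg (by omega), if_pos (by omega)]
      rw [show j + s + 1 - (j + (k + 1)) - 1 = s - 1 - k from by omega,
        show j + (k + 1) - j - 1 = k from by omega]
      simp only [Matrix.neg_mul, Matrix.mul_assoc, neg_inj]
    rw [Finset.sum_congr rfl hterm, h0, hlast]
    have hkey : Φ ^ s = Φ₁ ^ s +
        ∑ k ∈ Finset.range s, Φ₁ ^ (s - 1 - k) * ((E * Ginv) * C) * Φ ^ k := by
      have hXY : Φ₁ + (E * Ginv) * C = Φ := by rw [hΦ₁]; abel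
      have h := key Φ₁ ((E * Ginv) * C) s
      rwa [hXY] at h
    have hmain : Ginv * (C * (Φ ^ s * E)) = Ginv * (C * (Φ₁ ^ s * E))
        + ∑ k ∈ Finset.range s,
            Ginv * (C * (Φ₁ ^ (s - 1 - k) * ((E * Ginv) * C) * (Φ ^ k * E))) := by
      rw [hkey, Matrix.add_mul, Matrix.sum_mul, Matrix.mul_add, Matrix.mul_add,
        Matrix.mul_sum, Matrix.mul_sum]
      simp only [Matrix.mul_assoc]
    rw [hmain, Finset.sum_neg_distrib]
    abel

/-- **The open-loop left inverse block Toeplitz matrix is a left inverse of the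
fault-subsystem block Toeplitz matrix:** `T_L(Φ₁,B₁,C₁,D₁)·T_L(Φ,Ẽ,C,G) = I`. -/
theorem stmt9 (n nf ny : ℕ) (hn : 0 < n) (hnf : 0 < nf) (hny : 0 < ny)
    (Φ : Matrix (Fin n) (Fin n) ℝ) (E : Matrix (Fin n) (Fin nf) ℝ)
    (C : Matrix (Fin ny) (Fin n) ℝ) (G : Matrix (Fin ny) (Fin nf) ℝ)
    (Ginv : Matrix (Fin nf) (Fin ny) ℝ) (hG : Ginv * G = 1) :
    ∀ L : ℕ, 1 ≤ L →
      TL L (Φ - E * Ginv * C) (E * Ginv) (-(Ginv * C)) Ginv * TL L Φ E C G =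
        (1 : Matrix (Fin L × Fin nf) (Fin L × Fin nf) ℝ) := by
  intro L hL
  ext ⟨i, p⟩ ⟨j, q⟩
  rw [Matrix.mul_apply, Fintype.sum_prod_type]
  set F : ℕ → Matrix (Fin nf) (Fin nf) ℝ := fun l' =>
    (if (i : ℕ) = l' then Ginv
      else if l' < (i : ℕ) then
        (-(Ginv * C)) * (Φ - E * Ginv * C) ^ ((i : ℕ) - l' - 1) * (E * Ginv) else 0) *
    (if l' = (j : ℕ) then G
      else if (j : ℕ) < l' then C * Φ ^ (l' - (j : ℕ) - 1) * E else 0) with hF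
  have step1 : ∑ l : Fin L, ∑ r : Fin ny,
      TL L (Φ - E * Ginv * C) (E * Ginv) (-(Ginv * C)) Ginv (i, p) (l, r) *
        TL L Φ E C G (l, r) (j, q)
      = ∑ l : Fin L, F (l : ℕ) p q := by
    refine Finset.sum_congr rfl fun l _ => ?_
    simp only [hF]
    rw [Matrix.mul_apply]
    exact Finset.sum_congr rfl fun r _ => by rw [TL_apply, TL_apply]
  have h2 : (∑ l ∈ Finset.range L, F l) = if (i : ℕ) = (j : ℕ) then 1 else 0 := by
    simp only [hF]
    exact blocksum Φ E C G Ginv hG L i j i.isLt j.isLt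
  have h3 : ∑ l : Fin L, F (l : ℕ) = ∑ l ∈ Finset.range L, F l :=
    Fin.sum_univ_eq_sum_range F L
  calc ∑ l : Fin L, ∑ r : Fin ny,
      TL L (Φ - E * Ginv * C) (E * Ginv) (-(Ginv * C)) Ginv (i, p) (l, r) *
        TL L Φ E C G (l, r) (j, q)
      = ∑ l : Fin L, F (l : ℕ) p q := step1
    _ = (∑ l : Fin L, F (l : ℕ)) p q := (Matrix.sum_apply _ _ _ _).symm
    _ = ((if (i : ℕ) = (j : ℕ) then 1 else 0 : Matrix (Fin nf) (Fin nf) ℝ)) p q := by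
        rw [h3, h2]
    _ = (1 : Matrix (Fin L × Fin nf) (Fin L × Fin nf) ℝ) (i, p) (j, q) := by
        by_cases h : (i : ℕ) = (j : ℕ)
        · have hij : i = j := Fin.ext h
          subst hij
          simp [Matrix.one_apply, Prod.ext_iff]
        · have hij : i ≠ j := fun hh => h (by rw [hh])
          simp [Matrix.one_apply, Prod.ext_iff, h, hij]
end

section
/- For every L ≥ 1, the block Toeplitz matrix of the closed-loop left inverse is a left inverse of the block Toeplitz matrix of the fault subsystem: T_L(Φ₂, B₂, C₁, D₁) · T_L(Φ, Ẽ, C, G) = I (the Ln_f × Ln_f identity matrix), for any choice of the feedback gain K_r. -/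
open Matrix

/-- **The closed-loop left inverse block Toeplitz matrix is a left inverse of the
fault-subsystem block Toeplitz matrix, for any feedback gain `K_r`:**
`T_L(Φ₂,B₂,C₁,D₁)·T_L(Φ,Ẽ,C,G) = I`. -/
theorem stmt11 (n nf ny : ℕ) (hn : 0 < n) (hnf : 0 < nf) (hny : 0 < ny)
    (Φ : Matrix (Fin n) (Fin n) ℝ) (E : Matrix (Fin n) (Fin nf) ℝ)
    (C : Matrix (Fin ny) (Fin n) ℝ) (G : Matrix (Fin ny) (Fin nf) ℝ)
    (Ginv : Matrix (Fin nf) (Fin ny) ℝ) (hG : Ginv * G = 1)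
    (Kr : Matrix (Fin n) (Fin ny) ℝ)
    (Φ₁ : Matrix (Fin n) (Fin n) ℝ) (hΦ₁ : Φ₁ = Φ - E * Ginv * C)
    (B₁ : Matrix (Fin n) (Fin ny) ℝ) (hB₁ : B₁ = E * Ginv)
    (C₁ : Matrix (Fin nf) (Fin n) ℝ) (hC₁ : C₁ = -(Ginv * C))
    (D₁ : Matrix (Fin nf) (Fin ny) ℝ) (hD₁ : D₁ = Ginv)
    (C₂ : Matrix (Fin ny) (Fin n) ℝ) (hC₂ : C₂ = ((1 : Matrix (Fin ny) (Fin ny) ℝ) - G * Ginv) * C)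
    (D₂ : Matrix (Fin ny) (Fin ny) ℝ) (hD₂ : D₂ = G * Ginv)
    (Φ₂ : Matrix (Fin n) (Fin n) ℝ) (hΦ₂ : Φ₂ = Φ₁ - Kr * C₂)
    (B₂ : Matrix (Fin n) (Fin ny) ℝ) (hB₂ : B₂ = B₁ + Kr * ((1 : Matrix (Fin ny) (Fin ny) ℝ) - D₂)) :
    ∀ L : ℕ, 1 ≤ L →
      TL L Φ₂ B₂ C₁ D₁ * TL L Φ E C G =
        (1 : Matrix (Fin L × Fin nf) (Fin L × Fin nf) ℝ) := by
  -- basic algebraic identities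
  have hBG : B₂ * G = E := by
    rw [hB₂, hB₁, hD₂, Matrix.add_mul, Matrix.mul_assoc Kr, Matrix.sub_mul, Matrix.one_mul,
      Matrix.mul_assoc G, hG, Matrix.mul_one, sub_self, Matrix.mul_zero, add_zero,
      Matrix.mul_assoc E, hG, Matrix.mul_one]
  have hsum : Φ₂ + B₂ * C = Φ := by
    rw [hΦ₂, hΦ₁, hC₂, hB₂, hB₁, hD₂, Matrix.add_mul, Matrix.mul_assoc Kr]
    abel
  -- key Markov-parameter identity
  have hS : ∀ k : ℕ, Φ₂ ^ k * B₂ * G +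
      ∑ m ∈ Finset.range k, Φ₂ ^ (k - 1 - m) * B₂ * (C * Φ ^ m * E) = Φ ^ k * E := by
    intro k
    induction k with
    | zero => simp [hBG]
    | succ k ih =>
      rw [Finset.sum_range_succ]
      have e0 : (k + 1 : ℕ) - 1 - k = 0 := by omega
      have e1 : ∑ m ∈ Finset.range k, Φ₂ ^ (k + 1 - 1 - m) * B₂ * (C * Φ ^ m * E)
          = Φ₂ * ∑ m ∈ Finset.range k, Φ₂ ^ (k - 1 - m) * B₂ * (C * Φ ^ m * E) := by
        rw [Matrix.mul_sum]
        refine Finset.sum_congr rfl fun m hm => ?_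
        have hm' : m < k := Finset.mem_range.mp hm
        have e : k + 1 - 1 - m = (k - 1 - m) + 1 := by omega
        rw [e, pow_succ']
        simp only [Matrix.mul_assoc]
      rw [e0, e1, pow_zero, Matrix.one_mul]
      have e2 : Φ₂ ^ (k + 1) * B₂ * G = Φ₂ * (Φ₂ ^ k * B₂ * G) := by
        rw [pow_succ']
        simp only [Matrix.mul_assoc]
      rw [e2, ← add_assoc, ← Matrix.mul_add, ih, pow_succ', Matrix.mul_assoc, ← hsum]
      simp only [Matrix.add_mul, Matrix.mul_assoc]
  intro L hL
  ext ⟨i, p⟩ ⟨j, q⟩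
  rw [Matrix.mul_apply, Fintype.sum_prod_type]
  -- rewrite inner sums as matrix product entries
  have key : ∀ k : Fin L,
      (∑ r : Fin ny, TL L Φ₂ B₂ C₁ D₁ (i, p) (k, r) * TL L Φ E C G (k, r) (j, q)) =
      ((if (i : ℕ) = (k : ℕ) then D₁
          else if (k : ℕ) < (i : ℕ) then C₁ * Φ₂ ^ ((i : ℕ) - (k : ℕ) - 1) * B₂ else 0) *
        (if (k : ℕ) = (j : ℕ) then G
          else if (j : ℕ) < (k : ℕ) then C * Φ ^ ((k : ℕ) - (j : ℕ) - 1) * E else 0)) p q := by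
    intro k
    simp only [TL, Matrix.of_apply]
    split_ifs <;> simp [Matrix.mul_apply]
  simp only [key]
  rw [← Matrix.sum_apply]
  -- the block-level sum
  have main : ∑ k : Fin L,
      ((if (i : ℕ) = (k : ℕ) then D₁
          else if (k : ℕ) < (i : ℕ) then C₁ * Φ₂ ^ ((i : ℕ) - (k : ℕ) - 1) * B₂ else 0) *
        (if (k : ℕ) = (j : ℕ) then G
          else if (j : ℕ) < (k : ℕ) then C * Φ ^ ((k : ℕ) - (j : ℕ) - 1) * E else 0)) =
      (if (i : ℕ) = (j : ℕ) then (1 : Matrix (Fin nf) (Fin nf) ℝ) else 0) := by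
    have hrw : ∑ k : Fin L,
        ((if (i : ℕ) = (k : ℕ) then D₁
            else if (k : ℕ) < (i : ℕ) then C₁ * Φ₂ ^ ((i : ℕ) - (k : ℕ) - 1) * B₂ else 0) *
          (if (k : ℕ) = (j : ℕ) then G
            else if (j : ℕ) < (k : ℕ) then C * Φ ^ ((k : ℕ) - (j : ℕ) - 1) * E else 0)) =
        ∑ k ∈ Finset.range L,
        ((if (i : ℕ) = k then D₁
            else if k < (i : ℕ) then C₁ * Φ₂ ^ ((i : ℕ) - k - 1) * B₂ else 0) *
          (if k = (j : ℕ) then G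
            else if (j : ℕ) < k then C * Φ ^ (k - (j : ℕ) - 1) * E else 0)) :=
      Fin.sum_univ_eq_sum_range (fun k =>
        ((if (i : ℕ) = k then D₁
            else if k < (i : ℕ) then C₁ * Φ₂ ^ ((i : ℕ) - k - 1) * B₂ else 0) *
          (if k = (j : ℕ) then G
            else if (j : ℕ) < k then C * Φ ^ (k - (j : ℕ) - 1) * E else 0))) L
    rw [hrw]
    set g : ℕ → Matrix (Fin nf) (Fin nf) ℝ := fun k =>
        ((if (i : ℕ) = k then D₁
            else if k < (i : ℕ) then C₁ * Φ₂ ^ ((i : ℕ) - k - 1) * B₂ else 0) *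
          (if k = (j : ℕ) then G
            else if (j : ℕ) < k then C * Φ ^ (k - (j : ℕ) - 1) * E else 0)) with hg
    rcases lt_trichotomy (i : ℕ) (j : ℕ) with hij | hij | hij
    · rw [if_neg (by omega)]
      refine Finset.sum_eq_zero fun k hk => ?_
      try simp only [hg]
      split_ifs <;> first | simp | (exfalso; omega)
    · rw [if_pos hij]
      have h0 : ∀ b ∈ Finset.range L, b ≠ (i : ℕ) → g b = 0 := by
        intro k hk hki
        simp only [hg]
        split_ifs <;> first | simp | (exfalso; omega)
      rw [Finset.sum_eq_single_of_mem (i : ℕ) (Finset.mem_range.mpr i.isLt) h0]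
      simp only [hg]
      simp [hij, hD₁, hG]
    · rw [if_neg (by omega)]
      have hsub : ∑ k ∈ Finset.range L, g k = ∑ k ∈ Finset.range ((i : ℕ) + 1), g k := by
        refine (Finset.sum_subset (Finset.range_subset_range.mpr (by omega)) fun k hk hk' => ?_).symm
        have hik : (i : ℕ) < k := by
          simp only [Finset.mem_range] at hk hk'; omega
        simp only [hg]
        split_ifs <;> first | simp | (exfalso; omega)
      rw [hsub, Finset.sum_range_succ]
      have hss : Finset.Ico (j : ℕ) (i : ℕ) ⊆ Finset.range (i : ℕ) := by
        rw [Finset.range_eq_Ico]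
        exact Finset.Ico_subset_Ico (by omega) le_rfl
      have hIco : ∑ k ∈ Finset.range (i : ℕ), g k = ∑ k ∈ Finset.Ico (j : ℕ) (i : ℕ), g k := by
        refine (Finset.sum_subset hss fun k hk hk' => ?_).symm
        have hkj : k < (j : ℕ) := by
          simp only [Finset.mem_range] at hk; simp only [Finset.mem_Ico] at hk'; omega
        simp only [hg]
        split_ifs <;> first | simp | (exfalso; omega)
      rw [hIco, Finset.sum_Ico_eq_sum_range]
      have hrange : (i : ℕ) - (j : ℕ) = ((i : ℕ) - (j : ℕ) - 1) + 1 := by omega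
      rw [hrange, Finset.sum_range_succ']
      have hne : ¬ (i : ℕ) = (j : ℕ) := by omega
      have hgj : g ((j : ℕ) + 0) = C₁ * (Φ₂ ^ ((i : ℕ) - (j : ℕ) - 1) * B₂ * G) := by
        have ee : ∀ a : ℕ, a = (i : ℕ) - (j : ℕ) - 1 →
            C₁ * Φ₂ ^ a * B₂ * G = C₁ * (Φ₂ ^ ((i : ℕ) - (j : ℕ) - 1) * B₂ * G) := by
          rintro a rfl; simp only [Matrix.mul_assoc]
        simp only [hg]
        simp [hne, hij]
        exact ee _ (by omega)
      have hgi : g (i : ℕ) = D₁ * (C * Φ ^ ((i : ℕ) - (j : ℕ) - 1) * E) := by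
        simp only [hg]
        simp [hne, hij, Matrix.mul_assoc]
      have hgm : ∀ m ∈ Finset.range ((i : ℕ) - (j : ℕ) - 1), g ((j : ℕ) + (m + 1)) =
          C₁ * (Φ₂ ^ ((i : ℕ) - (j : ℕ) - 1 - 1 - m) * B₂ * (C * Φ ^ m * E)) := by
        intro m hm
        have hm' : m < (i : ℕ) - (j : ℕ) - 1 := Finset.mem_range.mp hm
        have ee : ∀ a b : ℕ, a = (i : ℕ) - (j : ℕ) - 1 - 1 - m → b = m →
            C₁ * Φ₂ ^ a * B₂ * (C * Φ ^ b * E) =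
            C₁ * (Φ₂ ^ ((i : ℕ) - (j : ℕ) - 1 - 1 - m) * B₂ * (C * Φ ^ m * E)) := by
          rintro a b rfl rfl; simp only [Matrix.mul_assoc]
        have c1 : ¬ (i : ℕ) = (j : ℕ) + (m + 1) := by omega
        have c2 : (j : ℕ) + (m + 1) < (i : ℕ) := by omega
        have c3 : ¬ (j : ℕ) + (m + 1) = (j : ℕ) := by omega
        have c4 : (j : ℕ) < (j : ℕ) + (m + 1) := by omega
        simp only [hg]
        simp only [c1, c2, c3, c4, if_true, if_false]
        exact ee _ _ (by omega) (by omega)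
      rw [Finset.sum_congr rfl hgm, hgj, hgi]
      have hfold : (∑ m ∈ Finset.range ((i : ℕ) - (j : ℕ) - 1),
            C₁ * (Φ₂ ^ ((i : ℕ) - (j : ℕ) - 1 - 1 - m) * B₂ * (C * Φ ^ m * E))) +
          C₁ * (Φ₂ ^ ((i : ℕ) - (j : ℕ) - 1) * B₂ * G) =
          C₁ * (Φ₂ ^ ((i : ℕ) - (j : ℕ) - 1) * B₂ * G +
            ∑ m ∈ Finset.range ((i : ℕ) - (j : ℕ) - 1),
              Φ₂ ^ ((i : ℕ) - (j : ℕ) - 1 - 1 - m) * B₂ * (C * Φ ^ m * E)) := by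
        rw [Matrix.mul_add, ← Matrix.mul_sum, add_comm]
      rw [hfold, hS ((i : ℕ) - (j : ℕ) - 1), hC₁, hD₁, Matrix.neg_mul,
        Matrix.mul_assoc C, ← Matrix.mul_assoc Ginv, neg_add_cancel]
  rw [main]
  by_cases hij : (i : ℕ) = (j : ℕ)
  · have hijf : i = j := Fin.ext hij
    subst hijf
    rw [if_pos rfl]
    simp [Matrix.one_apply, Prod.ext_iff]
  · rw [if_neg hij]
    have hne : ¬ ((i, p) = (j, q)) := by
      simp only [Prod.mk.injEq, not_and]
      intro h; exact absurd (congrArg Fin.val h) hij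
    simp [Matrix.one_apply, hne]
end

section
/- For every L ≥ 1 the following block Toeplitz identity holds: T_L(Φ, [B̃ K], −C, [−D I]) − T_L(Φ, Ẽ, C, G) · T_L(Φ₁, [B_f K_f], C₁, [D_{f,1} D₁]) = T_L(Φ₁, [B_f K_f], −C₂, [−D_{f,2} G_{f,2}]), where B_f = B̃ − ẼG⁻D, K_f = K + ẼG⁻, D_{f,1} = −G⁻D, D_{f,2} = (I − GG⁻)D, and G_{f,2} = I − GG⁻ (here [X Y] denotes horizontal block concatenation). -/
open Matrix

open Finset

/-- Markov parameter sequence of the system `(A,B,C,D)`. -/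
def mkv {α m p : Type*} [Fintype α] [DecidableEq α] (A : Matrix α α ℝ) (B : Matrix α m ℝ)
    (C : Matrix p α ℝ) (D : Matrix p m ℝ) : ℕ → Matrix p m ℝ
  | 0 => D
  | (k+1) => C * A ^ k * B

/-- Generic block Toeplitz matrix from a sequence. -/
def TLg {m p : Type*} (L : ℕ) (f : ℕ → Matrix p m ℝ) : Matrix (Fin L × p) (Fin L × m) ℝ :=
  Matrix.of fun ip jq =>
    if (jq.1 : ℕ) ≤ (ip.1 : ℕ) then f ((ip.1 : ℕ) - (jq.1 : ℕ)) ip.2 jq.2 else 0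

lemma TL_eq_TLg {α m p : Type*} [Fintype α] [DecidableEq α] (L : ℕ)
    (A : Matrix α α ℝ) (B : Matrix α m ℝ) (C : Matrix p α ℝ) (D : Matrix p m ℝ) :
    TL L A B C D = TLg L (mkv A B C D) := by
  ext ⟨i, a⟩ ⟨j, b⟩
  simp only [TL, TLg, Matrix.of_apply]
  rcases lt_trichotomy (j : ℕ) (i : ℕ) with h | h | h
  · rw [if_neg (by omega), if_pos h, if_pos (le_of_lt h)]
    have h2 : (i : ℕ) - j = ((i : ℕ) - j - 1) + 1 := by omega
    rw [h2]
    simp [mkv]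
  · rw [if_pos h.symm, if_pos (le_of_eq h)]
    have h2 : (i : ℕ) - j = 0 := by omega
    rw [h2]
    rfl
  · rw [if_neg (by omega), if_neg (by omega), if_neg (by omega)]

lemma TLg_mul_apply {m p q : Type*} [Fintype q] (L : ℕ)
    (f : ℕ → Matrix p q ℝ) (g : ℕ → Matrix q m ℝ)
    (i j : Fin L) (a : p) (b : m) :
    (TLg L f * TLg L g) (i, a) (j, b) =
      if (j : ℕ) ≤ (i : ℕ) then
        (∑ t ∈ range ((i : ℕ) - j + 1), f ((i : ℕ) - j - t) * g t) a b
      else 0 := by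
  rw [Matrix.mul_apply, Fintype.sum_prod_type]
  have key : ∀ l : Fin L,
      (∑ r : q, TLg L f (i, a) (l, r) * TLg L g (l, r) (j, b)) =
      (if (j : ℕ) ≤ (l : ℕ) ∧ (l : ℕ) ≤ (i : ℕ) then
        (f ((i : ℕ) - l) * g ((l : ℕ) - j)) a b else 0) := by
    intro l
    simp only [TLg, Matrix.of_apply]
    by_cases h1 : (l : ℕ) ≤ (i : ℕ) <;> by_cases h2 : (j : ℕ) ≤ (l : ℕ)
    · rw [if_pos ⟨h2, h1⟩, Matrix.mul_apply]
      exact Finset.sum_congr rfl fun r _ => by rw [if_pos h1, if_pos h2]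
    · rw [if_neg (by tauto)]
      exact Finset.sum_eq_zero fun r _ => by rw [if_neg h2, mul_zero]
    · rw [if_neg (by tauto)]
      exact Finset.sum_eq_zero fun r _ => by rw [if_neg h1, zero_mul]
    · rw [if_neg (by tauto)]
      exact Finset.sum_eq_zero fun r _ => by rw [if_neg h1, zero_mul]
  rw [Finset.sum_congr rfl (fun l _ => key l)]
  have hfin : (∑ l : Fin L, (if (j : ℕ) ≤ (l : ℕ) ∧ (l : ℕ) ≤ (i : ℕ) then
        (f ((i : ℕ) - l) * g ((l : ℕ) - j)) a b else 0)) =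
      ∑ t ∈ range L, (if (j : ℕ) ≤ t ∧ t ≤ (i : ℕ) then
        (f ((i : ℕ) - t) * g (t - j)) a b else 0) :=
    Fin.sum_univ_eq_sum_range (fun t => if (j : ℕ) ≤ t ∧ t ≤ (i : ℕ) then
        (f ((i : ℕ) - t) * g (t - j)) a b else 0) L
  rw [hfin]
  by_cases hji : (j : ℕ) ≤ (i : ℕ)
  · rw [if_pos hji, Matrix.sum_apply]
    have hsub : ∑ t ∈ range L, (if (j : ℕ) ≤ t ∧ t ≤ (i : ℕ) then
        (f ((i : ℕ) - t) * g (t - j)) a b else 0) =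
        ∑ t ∈ Finset.Icc (j : ℕ) (i : ℕ), (f ((i : ℕ) - t) * g (t - j)) a b := by
      rw [← Finset.sum_subset (s₁ := Finset.Icc (j : ℕ) (i : ℕ)) (s₂ := range L)
        (by intro t ht; rw [Finset.mem_Icc] at ht; rw [Finset.mem_range]; omega)
        (by intro t _ hts; rw [Finset.mem_Icc] at hts; rw [if_neg hts])]
      exact Finset.sum_congr rfl (fun t ht => by
        rw [Finset.mem_Icc] at ht; rw [if_pos ht])
    rw [hsub]
    refine Finset.sum_nbij' (fun t => t - (j : ℕ)) (fun t => t + (j : ℕ)) ?_ ?_ ?_ ?_ ?_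
    · intro t ht; simp only [Finset.mem_Icc] at ht; simp only [Finset.mem_range]; omega
    · intro t ht; simp only [Finset.mem_range] at ht; simp only [Finset.mem_Icc]; omega
    · intro t ht; simp only [Finset.mem_Icc] at ht; omega
    · intro t ht; simp only [Finset.mem_range] at ht; omega
    · intro t ht
      simp only [Finset.mem_Icc] at ht
      have e1 : (i : ℕ) - (j : ℕ) - (t - (j : ℕ)) = (i : ℕ) - t := by omega
      rw [e1]
  · rw [if_neg hji]
    apply Finset.sum_eq_zero
    intro t ht
    rw [if_neg (by omega)]

/-- If the Markov sequences satisfy the convolution identity, so do the Toeplitz matrices. -/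
lemma TLg_sub_mul {m p q : Type*} [Fintype q] (L : ℕ)
    (f1 : ℕ → Matrix p m ℝ) (f2 : ℕ → Matrix p q ℝ) (f3 : ℕ → Matrix q m ℝ)
    (f4 : ℕ → Matrix p m ℝ)
    (h : ∀ k, f1 k - ∑ t ∈ range (k + 1), f2 (k - t) * f3 t = f4 k) :
    TLg L f1 - TLg L f2 * TLg L f3 = TLg L f4 := by
  ext ⟨i, a⟩ ⟨j, b⟩
  rw [Matrix.sub_apply, TLg_mul_apply]
  by_cases hji : (j : ℕ) ≤ (i : ℕ)
  · rw [if_pos hji]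
    have hji2 : j ≤ i := hji
    have := congrArg (fun M => M a b) (h ((i : ℕ) - j))
    simp only [Matrix.sub_apply] at this
    simpa [TLg, hji, hji2] using this
  · have hji2 : ¬ j ≤ i := hji
    simp [TLg, hji, hji2]

lemma tele {N : ℕ} (Φ Ψ : Matrix (Fin N) (Fin N) ℝ) :
    ∀ k : ℕ, Ψ ^ k = Φ ^ k + ∑ t ∈ range k, Φ ^ (k - 1 - t) * (Ψ - Φ) * Ψ ^ t := by
  intro k
  induction k with
  | zero => simp
  | succ k ih =>
    rw [Finset.sum_range_succ]
    have e0 : k + 1 - 1 - k = 0 := by omega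
    rw [e0, pow_zero, one_mul]
    have hsum : ∑ t ∈ range k, Φ ^ (k + 1 - 1 - t) * (Ψ - Φ) * Ψ ^ t
        = Φ * ∑ t ∈ range k, Φ ^ (k - 1 - t) * (Ψ - Φ) * Ψ ^ t := by
      rw [Finset.mul_sum]
      refine Finset.sum_congr rfl fun t ht => ?_
      rw [Finset.mem_range] at ht
      have e1 : k + 1 - 1 - t = (k - 1 - t) + 1 := by omega
      rw [e1, pow_succ']
      noncomm_ring
    rw [hsum]
    have ih' : ∑ t ∈ range k, Φ ^ (k - 1 - t) * (Ψ - Φ) * Ψ ^ t = Ψ ^ k - Φ ^ k := by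
      rw [ih]; abel
    rw [ih', pow_succ', pow_succ']
    noncomm_ring

lemma conv_block {n nf ny m : ℕ}
    (Φ : Matrix (Fin n) (Fin n) ℝ) (E : Matrix (Fin n) (Fin nf) ℝ)
    (C : Matrix (Fin ny) (Fin n) ℝ) (G : Matrix (Fin ny) (Fin nf) ℝ)
    (Ginv : Matrix (Fin nf) (Fin ny) ℝ)
    (Φ₁ : Matrix (Fin n) (Fin n) ℝ) (hΦ₁ : Φ₁ = Φ - E * Ginv * C)
    (B0 : Matrix (Fin n) (Fin m) ℝ) (D0 : Matrix (Fin ny) (Fin m) ℝ) :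
    ∀ k : ℕ, mkv Φ B0 (-C) (-D0) k
      - ∑ t ∈ range (k + 1),
          mkv Φ E C G (k - t) *
            mkv Φ₁ (B0 - E * Ginv * D0) (-(Ginv * C)) (-(Ginv * D0)) t
      = mkv Φ₁ (B0 - E * Ginv * D0)
          (-(((1 : Matrix (Fin ny) (Fin ny) ℝ) - G * Ginv) * C))
          (-(((1 : Matrix (Fin ny) (Fin ny) ℝ) - G * Ginv) * D0)) k := by
  intro k
  match k with
  | 0 =>
    show -D0 - (∑ t ∈ range 1, _) = _
    rw [Finset.sum_range_one]
    show -D0 - G * -(Ginv * D0) = -((1 - G * Ginv) * D0)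
    rw [Matrix.mul_neg, sub_neg_eq_add, Matrix.sub_mul, Matrix.one_mul, neg_sub, Matrix.mul_assoc]
    abel
  | (k+1) =>
    rw [Finset.sum_range_succ']
    -- term t = 0 : mkv Φ E C G (k+1) * (-(Ginv * D0))
    have e0 : k + 1 - 0 = k + 1 := rfl
    rw [e0]
    show -C * Φ ^ k * B0
        - (∑ t ∈ range (k + 1), mkv Φ E C G (k + 1 - (t + 1)) *
            (-(Ginv * C) * Φ₁ ^ t * (B0 - E * Ginv * D0))
          + C * Φ ^ k * E * -(Ginv * D0))
      = -(((1 : Matrix (Fin ny) (Fin ny) ℝ) - G * Ginv) * C) * Φ₁ ^ k * (B0 - E * Ginv * D0)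
    have esum : ∀ t ∈ range (k + 1), mkv Φ E C G (k + 1 - (t + 1)) *
            (-(Ginv * C) * Φ₁ ^ t * (B0 - E * Ginv * D0))
        = mkv Φ E C G (k - t) * (-(Ginv * C) * Φ₁ ^ t * (B0 - E * Ginv * D0)) := by
      intro t _
      have e : k + 1 - (t + 1) = k - t := by omega
      rw [e]
    rw [Finset.sum_congr rfl esum, Finset.sum_range_succ]
    have ekk : k - k = 0 := by omega
    rw [ekk]
    show -C * Φ ^ k * B0
        - (∑ t ∈ range k, mkv Φ E C G (k - t) *
            (-(Ginv * C) * Φ₁ ^ t * (B0 - E * Ginv * D0))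
          + G * (-(Ginv * C) * Φ₁ ^ k * (B0 - E * Ginv * D0))
          + C * Φ ^ k * E * -(Ginv * D0))
      = -(((1 : Matrix (Fin ny) (Fin ny) ℝ) - G * Ginv) * C) * Φ₁ ^ k * (B0 - E * Ginv * D0)
    have esum2 : ∀ t ∈ range k, mkv Φ E C G (k - t) *
            (-(Ginv * C) * Φ₁ ^ t * (B0 - E * Ginv * D0))
        = C * (Φ ^ (k - 1 - t) * (Φ₁ - Φ) * Φ₁ ^ t) * (B0 - E * Ginv * D0) := by
      intro t ht
      rw [Finset.mem_range] at ht
      have e1 : k - t = (k - 1 - t) + 1 := by omega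
      rw [e1]
      show C * Φ ^ (k - 1 - t) * E * (-(Ginv * C) * Φ₁ ^ t * (B0 - E * Ginv * D0)) = _
      have e2 : Φ₁ - Φ = -(E * Ginv * C) := by rw [hΦ₁, sub_sub_cancel_left]
      rw [e2]
      simp only [Matrix.mul_assoc, Matrix.mul_neg, Matrix.neg_mul]
    rw [Finset.sum_congr rfl esum2, ← Matrix.sum_mul, ← Matrix.mul_sum]
    have htel : ∑ t ∈ range k, Φ ^ (k - 1 - t) * (Φ₁ - Φ) * Φ₁ ^ t = Φ₁ ^ k - Φ ^ k := by
      rw [tele Φ Φ₁ k]; abel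
    rw [htel]
    simp only [Matrix.mul_sub, Matrix.sub_mul, Matrix.mul_add, Matrix.add_mul,
      Matrix.neg_mul, Matrix.mul_neg, neg_add,
      Matrix.mul_assoc, Matrix.one_mul, Matrix.mul_one, neg_sub, sub_neg_eq_add, neg_neg]
    abel

lemma fc_sub {m p q : Type*} (A A' : Matrix p m ℝ) (B B' : Matrix p q ℝ) :
    fromCols A B - fromCols A' B' = fromCols (A - A') (B - B') := by
  ext i (j | j) <;> simp [Matrix.fromCols, Matrix.sum_apply]

lemma fc_sum {m p q ι : Type*} (s : Finset ι) (f : ι → Matrix p m ℝ) (g : ι → Matrix p q ℝ) :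
    ∑ x ∈ s, fromCols (f x) (g x) = fromCols (∑ x ∈ s, f x) (∑ x ∈ s, g x) := by
  ext i (j | j) <;> simp [Matrix.fromCols, Matrix.sum_apply]

lemma mkv_fromCols {α m p q : Type*} [Fintype α] [DecidableEq α]
    (A : Matrix α α ℝ) (B1 : Matrix α m ℝ) (B2 : Matrix α q ℝ)
    (C : Matrix p α ℝ) (D1 : Matrix p m ℝ) (D2 : Matrix p q ℝ) (k : ℕ) :
    mkv A (fromCols B1 B2) C (fromCols D1 D2) k
      = fromCols (mkv A B1 C D1 k) (mkv A B2 C D2 k) := by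
  match k with
  | 0 => rfl
  | (k+1) => exact Matrix.mul_fromCols _ _ _

/-- **The Toeplitz matrix `Q_L = T_L^z − T_L^f · R_L`:**
`T_L(Φ,[B̃ K],−C,[−D I]) − T_L(Φ,Ẽ,C,G) · T_L(Φ₁,[B_f K_f],C₁,[D_{f,1} D₁])
 = T_L(Φ₁,[B_f K_f],−C₂,[−D_{f,2} G_{f,2}])`. -/
theorem stmt14 (n nu nf ny : ℕ) (hn : 0 < n) (hnu : 0 < nu) (hnf : 0 < nf) (hny : 0 < ny)
    (Φ : Matrix (Fin n) (Fin n) ℝ) (Bt : Matrix (Fin n) (Fin nu) ℝ)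
    (E : Matrix (Fin n) (Fin nf) ℝ) (K : Matrix (Fin n) (Fin ny) ℝ)
    (C : Matrix (Fin ny) (Fin n) ℝ) (D : Matrix (Fin ny) (Fin nu) ℝ)
    (G : Matrix (Fin ny) (Fin nf) ℝ)
    (Ginv : Matrix (Fin nf) (Fin ny) ℝ) (hG : Ginv * G = 1)
    (Φ₁ : Matrix (Fin n) (Fin n) ℝ) (hΦ₁ : Φ₁ = Φ - E * Ginv * C)
    (C₁ : Matrix (Fin nf) (Fin n) ℝ) (hC₁ : C₁ = -(Ginv * C))
    (D₁ : Matrix (Fin nf) (Fin ny) ℝ) (hD₁ : D₁ = Ginv)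
    (C₂ : Matrix (Fin ny) (Fin n) ℝ) (hC₂ : C₂ = ((1 : Matrix (Fin ny) (Fin ny) ℝ) - G * Ginv) * C)
    (Bf : Matrix (Fin n) (Fin nu) ℝ) (hBf : Bf = Bt - E * Ginv * D)
    (Kf : Matrix (Fin n) (Fin ny) ℝ) (hKf : Kf = K + E * Ginv)
    (Df1 : Matrix (Fin nf) (Fin nu) ℝ) (hDf1 : Df1 = -(Ginv * D))
    (Df2 : Matrix (Fin ny) (Fin nu) ℝ)
    (hDf2 : Df2 = ((1 : Matrix (Fin ny) (Fin ny) ℝ) - G * Ginv) * D)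
    (Gf2 : Matrix (Fin ny) (Fin ny) ℝ)
    (hGf2 : Gf2 = (1 : Matrix (Fin ny) (Fin ny) ℝ) - G * Ginv) :
    ∀ L : ℕ, 1 ≤ L →
      TL L Φ (Matrix.fromCols Bt K) (-C)
          (Matrix.fromCols (-D) (1 : Matrix (Fin ny) (Fin ny) ℝ))
        - TL L Φ E C G *
            TL L Φ₁ (Matrix.fromCols Bf Kf) C₁ (Matrix.fromCols Df1 D₁) =
      TL L Φ₁ (Matrix.fromCols Bf Kf) (-C₂) (Matrix.fromCols (-Df2) Gf2) := by
  intro L _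
  rw [TL_eq_TLg, TL_eq_TLg, TL_eq_TLg, TL_eq_TLg]
  apply TLg_sub_mul
  intro k
  have h1 := conv_block Φ E C G Ginv Φ₁ hΦ₁ Bt D k
  have h2 := conv_block Φ E C G Ginv Φ₁ hΦ₁ K (-1) k
  simp only [Matrix.mul_neg, Matrix.mul_one, neg_neg, sub_neg_eq_add] at h2
  have hsum : ∑ t ∈ Finset.range (k + 1),
      mkv Φ E C G (k - t) * mkv Φ₁ (Matrix.fromCols Bf Kf) C₁ (Matrix.fromCols Df1 D₁) t
      = Matrix.fromCols
          (∑ t ∈ Finset.range (k + 1), mkv Φ E C G (k - t) * mkv Φ₁ Bf C₁ Df1 t)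
          (∑ t ∈ Finset.range (k + 1), mkv Φ E C G (k - t) * mkv Φ₁ Kf C₁ D₁ t) := by
    rw [← fc_sum]
    refine Finset.sum_congr rfl fun t _ => ?_
    rw [mkv_fromCols, Matrix.mul_fromCols]
  rw [hsum, mkv_fromCols, mkv_fromCols, fc_sub]
  rw [Matrix.fromCols_inj.eq_iff]
  constructor
  · rw [hC₁, hDf1, hBf, hC₂, hDf2]
    exact h1
  · rw [hC₁, hD₁, hKf, hC₂, hGf2]
    exact h2
end

section
/- Suppose the sequences x̃ : ℕ → ℝⁿ, f : ℕ → ℝ^{n_f}, r, e : ℕ → ℝ^{n_y} satisfy for all k the residual dynamics x̃(k+1) = Φx̃(k) + Ẽf(k) and r(k) = Cx̃(k) + Gf(k) + e(k), and x_r : ℕ → ℝⁿ, f̂ : ℕ → ℝ^{n_f} satisfy the closed-loop left inverse equations x_r(k+1) = Φ₂x_r(k) + B₂r(k) and f̂(k) = C₁x_r(k) + D₁r(k), initialized at time k₀ with x_r(k₀) = 0. Then for every i ≥ 0: f(k₀+i) − f̂(k₀+i) = C₁·Φ₂^i·x̃(k₀) − Σ_{j=0}^{i−1} C₁·Φ₂^{i−1−j}·B₂·e(k₀+j)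 − D₁·e(k₀+i). In particular, if e(k) = 0 for all k, then for a window of length L the final estimation error is f(k₀+L−1) − f̂(k₀+L−1) = C₁·Φ₂^{L−1}·x̃(k₀). -/
open Matrix

/-- **Explicit fault estimation error of the closed-loop left inverse over a
window.** With `x_r(k₀) = 0`, for every `i ≥ 0`
`f(k₀+i) − f̂(k₀+i) = C₁Φ₂^i x̃(k₀) − ∑_{j<i} C₁Φ₂^{i−1−j}B₂ e(k₀+j) − D₁ e(k₀+i)`;
in particular, if `e ≡ 0`, the final error over a window of length `L` is
`C₁Φ₂^{L−1} x̃(k₀)`. -/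
theorem stmt15 (n nf ny : ℕ) (hn : 0 < n) (hnf : 0 < nf) (hny : 0 < ny)
    (Φ : Matrix (Fin n) (Fin n) ℝ) (E : Matrix (Fin n) (Fin nf) ℝ)
    (C : Matrix (Fin ny) (Fin n) ℝ) (G : Matrix (Fin ny) (Fin nf) ℝ)
    (Ginv : Matrix (Fin nf) (Fin ny) ℝ) (hG : Ginv * G = 1)
    (Kr : Matrix (Fin n) (Fin ny) ℝ)
    (Φ₁ : Matrix (Fin n) (Fin n) ℝ) (hΦ₁ : Φ₁ = Φ - E * Ginv * C)
    (B₁ : Matrix (Fin n) (Fin ny) ℝ) (hB₁ : B₁ = E * Ginv)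
    (C₁ : Matrix (Fin nf) (Fin n) ℝ) (hC₁ : C₁ = -(Ginv * C))
    (D₁ : Matrix (Fin nf) (Fin ny) ℝ) (hD₁ : D₁ = Ginv)
    (C₂ : Matrix (Fin ny) (Fin n) ℝ) (hC₂ : C₂ = ((1 : Matrix (Fin ny) (Fin ny) ℝ) - G * Ginv) * C)
    (D₂ : Matrix (Fin ny) (Fin ny) ℝ) (hD₂ : D₂ = G * Ginv)
    (Φ₂ : Matrix (Fin n) (Fin n) ℝ) (hΦ₂ : Φ₂ = Φ₁ - Kr * C₂)
    (B₂ : Matrix (Fin n) (Fin ny) ℝ) (hB₂ : B₂ = B₁ + Kr * ((1 : Matrix (Fin ny) (Fin ny) ℝ) - D₂))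
    (xt : ℕ → Fin n → ℝ) (f : ℕ → Fin nf → ℝ) (r e : ℕ → Fin ny → ℝ)
    (xr : ℕ → Fin n → ℝ) (fhat : ℕ → Fin nf → ℝ) (k₀ : ℕ)
    (hx : ∀ k, xt (k + 1) = Φ *ᵥ xt k + E *ᵥ f k)
    (hr : ∀ k, r k = C *ᵥ xt k + G *ᵥ f k + e k)
    (hxr : ∀ k, xr (k + 1) = Φ₂ *ᵥ xr k + B₂ *ᵥ r k)
    (hfhat : ∀ k, fhat k = C₁ *ᵥ xr k + D₁ *ᵥ r k)
    (hinit : xr k₀ = 0) :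
    (∀ i : ℕ, f (k₀ + i) - fhat (k₀ + i) =
        (C₁ * Φ₂ ^ i) *ᵥ xt k₀
          - ∑ j ∈ Finset.range i, (C₁ * Φ₂ ^ (i - 1 - j) * B₂) *ᵥ e (k₀ + j)
          - D₁ *ᵥ e (k₀ + i)) ∧
    ((∀ k, e k = 0) → ∀ L : ℕ, 1 ≤ L →
        f (k₀ + L - 1) - fhat (k₀ + L - 1) = (C₁ * Φ₂ ^ (L - 1)) *ᵥ xt k₀) := by
  set δ : ℕ → Fin n → ℝ := fun k => xt k - xr k with hδ
  have hΦdiff : Φ - Φ₂ = B₂ * C := by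
    subst hB₂ hB₁ hΦ₂ hΦ₁ hC₂ hD₂
    simp only [Matrix.add_mul, Matrix.sub_mul, Matrix.one_mul, Matrix.mul_assoc]
    abel
  have hB₂G : B₂ * G = E := by
    subst hB₂ hB₁ hD₂
    simp [Matrix.add_mul, Matrix.sub_mul, Matrix.mul_assoc, hG]
  have hstep : ∀ k, δ (k + 1) = Φ₂ *ᵥ δ k - B₂ *ᵥ e k := by
    intro k
    simp only [hδ]
    rw [hx, hxr, hr]
    simp only [Matrix.mulVec_add, Matrix.mulVec_mulVec, hB₂G, ← hΦdiff,
      Matrix.sub_mulVec, Matrix.mulVec_sub]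
    abel
  have hsum : ∀ (A : Matrix (Fin n) (Fin n) ℝ) (m : ℕ) (v : ℕ → Fin n → ℝ),
      A *ᵥ (∑ j ∈ Finset.range m, v j) = ∑ j ∈ Finset.range m, A *ᵥ v j := by
    intro A m v
    simp only [← Matrix.mulVecLin_apply]
    exact map_sum (Matrix.mulVecLin A) v (Finset.range m)
  have hsum' : ∀ (A : Matrix (Fin nf) (Fin n) ℝ) (m : ℕ) (v : ℕ → Fin n → ℝ),
      A *ᵥ (∑ j ∈ Finset.range m, v j) = ∑ j ∈ Finset.range m, A *ᵥ v j := by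
    intro A m v
    simp only [← Matrix.mulVecLin_apply]
    exact map_sum (Matrix.mulVecLin A) v (Finset.range m)
  have hδi : ∀ i : ℕ, δ (k₀ + i) = (Φ₂ ^ i) *ᵥ xt k₀
      - ∑ j ∈ Finset.range i, (Φ₂ ^ (i - 1 - j) * B₂) *ᵥ e (k₀ + j) := by
    intro i
    induction i with
    | zero => simp [hδ, hinit]
    | succ i ih =>
      have : k₀ + (i + 1) = (k₀ + i) + 1 := by omega
      rw [this, hstep, ih, Finset.sum_range_succ]
      rw [Matrix.mulVec_sub, hsum]
      have hterm : ∀ j ∈ Finset.range i,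
          Φ₂ *ᵥ ((Φ₂ ^ (i - 1 - j) * B₂) *ᵥ e (k₀ + j))
            = (Φ₂ ^ (i + 1 - 1 - j) * B₂) *ᵥ e (k₀ + j) := by
        intro j hj
        have hj' := Finset.mem_range.mp hj
        have heq : i - 1 - j + 1 = i + 1 - 1 - j := by omega
        rw [Matrix.mulVec_mulVec, ← Matrix.mul_assoc, ← pow_succ', heq]
      rw [Finset.sum_congr rfl hterm, Matrix.mulVec_mulVec, ← pow_succ']
      simp
      abel
  have hferr : ∀ k, f k - fhat k = C₁ *ᵥ δ k - D₁ *ᵥ e k := by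
    intro k
    simp only [hδ]
    rw [hfhat, hr, hD₁, hC₁]
    simp only [Matrix.mulVec_add, Matrix.mulVec_mulVec, hG, Matrix.one_mulVec,
      Matrix.neg_mulVec, Matrix.sub_mulVec, Matrix.mulVec_sub]
    abel
  have main : ∀ i : ℕ, f (k₀ + i) - fhat (k₀ + i) =
      (C₁ * Φ₂ ^ i) *ᵥ xt k₀
        - ∑ j ∈ Finset.range i, (C₁ * Φ₂ ^ (i - 1 - j) * B₂) *ᵥ e (k₀ + j)
        - D₁ *ᵥ e (k₀ + i) := by
    intro i
    rw [hferr, hδi, Matrix.mulVec_sub, hsum']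
    simp only [Matrix.mulVec_mulVec, Matrix.mul_assoc]
  refine ⟨main, ?_⟩
  intro he L hL
  have h1 : k₀ + L - 1 = k₀ + (L - 1) := by omega
  rw [h1, main (L - 1)]
  simp [he]
end

section
/- Let O be an m×n real matrix and T an m×p real matrix such that TᵀT is invertible. Set G' = (TᵀT)⁻¹Tᵀ, P = TG', and Δ = Oᵀ(I − P)O, and let Δ⁽¹⁾ be any n×n real matrix satisfying ΔΔ⁽¹⁾Δ = Δ. For any r ∈ ℝ^m, define x̂ = Δ⁽¹⁾Oᵀ(I − P)r and f̂ = G'(r − Ox̂). Then the pair (x̂, f̂) satisfies the normal equations of the least-squares problem min over (x,f) of ‖r − Ox − Tf‖₂², namely Oᵀ(Ox̂ + Tf̂) = Oᵀr and Tᵀ(Ox̂ + Tf̂) = Tᵀr; consequently (x̂, f̂) is a minimizer of ‖r − Ox − Tf‖₂² over all (x, f) ∈ ℝⁿ × ℝ^p. -/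
open Matrix

/-- **The generalized-inverse least-squares solution satisfies the normal
equations and minimizes the squared residual.**
With `G' = (TᵀT)⁻¹Tᵀ`, `P = TG'`, `Δ = Oᵀ(I − P)O`, `Δ⁽¹⁾` a (1)-inverse of `Δ`,
and, for a given `r`, `x̂ = Δ⁽¹⁾Oᵀ(I − P)r` and `f̂ = G'(r − Ox̂)`, the pair
`(x̂, f̂)` satisfies `Oᵀ(Ox̂ + Tf̂) = Oᵀr`, `Tᵀ(Ox̂ + Tf̂) = Tᵀr`, and minimizes
`‖r − Ox − Tf‖₂²` over all `(x, f)`. -/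
theorem stmt17 (m n p : ℕ)
    (O : Matrix (Fin m) (Fin n) ℝ) (T : Matrix (Fin m) (Fin p) ℝ)
    [Invertible (Tᵀ * T)]
    (G' : Matrix (Fin p) (Fin m) ℝ) (hG' : G' = ⅟(Tᵀ * T) * Tᵀ)
    (P : Matrix (Fin m) (Fin m) ℝ) (hP : P = T * G')
    (Δ : Matrix (Fin n) (Fin n) ℝ)
    (hΔ : Δ = Oᵀ * ((1 : Matrix (Fin m) (Fin m) ℝ) - P) * O)
    (Δ₁ : Matrix (Fin n) (Fin n) ℝ) (hΔ₁ : Δ * Δ₁ * Δ = Δ)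
    (r : Fin m → ℝ) (xhat : Fin n → ℝ) (fhat : Fin p → ℝ)
    (hxhat : xhat = Δ₁ *ᵥ (Oᵀ *ᵥ (((1 : Matrix (Fin m) (Fin m) ℝ) - P) *ᵥ r)))
    (hfhat : fhat = G' *ᵥ (r - O *ᵥ xhat)) :
    (Oᵀ *ᵥ (O *ᵥ xhat + T *ᵥ fhat) = Oᵀ *ᵥ r) ∧
    (Tᵀ *ᵥ (O *ᵥ xhat + T *ᵥ fhat) = Tᵀ *ᵥ r) ∧
    (∀ (x : Fin n → ℝ) (f : Fin p → ℝ),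
      (r - O *ᵥ xhat - T *ᵥ fhat) ⬝ᵥ (r - O *ᵥ xhat - T *ᵥ fhat) ≤
        (r - O *ᵥ x - T *ᵥ f) ⬝ᵥ (r - O *ᵥ x - T *ᵥ f)) := by
  set Q : Matrix (Fin m) (Fin m) ℝ := 1 - P with hQ
  -- basic identities
  have hTTG : Tᵀ * T * G' = Tᵀ := by
    rw [hG', ← Matrix.mul_assoc, mul_invOf_self, Matrix.one_mul]
  have hTtP : Tᵀ * P = Tᵀ := by
    rw [hP, ← Matrix.mul_assoc, hTTG]
  have hTtQ : Tᵀ * Q = 0 := by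
    rw [hQ, Matrix.mul_sub, Matrix.mul_one, hTtP, sub_self]
  have hPsym : Pᵀ = P := by
    rw [hP, hG', invOf_eq_nonsing_inv]
    simp only [Matrix.transpose_mul, Matrix.transpose_nonsing_inv, Matrix.transpose_transpose,
      Matrix.mul_assoc]
  have hQsym : Qᵀ = Q := by
    rw [hQ, Matrix.transpose_sub, Matrix.transpose_one, hPsym]
  have hQQ : Q * Q = Q := by
    have hPP : P * P = P := by
      rw [hP, Matrix.mul_assoc, ← Matrix.mul_assoc G' T G']
      rw [hG', Matrix.mul_assoc (⅟(Tᵀ*T)) Tᵀ T, invOf_mul_self]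
      simp [Matrix.mul_assoc]
    rw [hQ]
    simp only [Matrix.sub_mul, Matrix.mul_sub, Matrix.one_mul, Matrix.mul_one, hPP]
    abel
  -- Δ = (QO)ᵀ (QO), Δ symmetric
  have hB : (Q * O)ᵀ * (Q * O) = Δ := by
    rw [Matrix.transpose_mul, hQsym, Matrix.mul_assoc, ← Matrix.mul_assoc Q Q O, hQQ,
      hΔ, Matrix.mul_assoc]
  have hΔsym : Δᵀ = Δ := by
    rw [← hB, Matrix.transpose_mul, Matrix.transpose_transpose, hB]
  have hΔ₁' : Δ * Δ₁ᵀ * Δ = Δ := by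
    have h := congrArg Matrix.transpose hΔ₁
    simpa only [Matrix.transpose_mul, hΔsym, ← Matrix.mul_assoc] using h
  -- key identity: Δ Δ₁ (Oᵀ Q) = Oᵀ Q
  have key : Δ * Δ₁ * (Oᵀ * Q) = Oᵀ * Q := by
    have hBT : Oᵀ * Q = (Q * O)ᵀ := by rw [Matrix.transpose_mul, hQsym]
    rw [hBT]
    set B : Matrix (Fin m) (Fin n) ℝ := Q * O with hBdef
    have h0 : (Δ * Δ₁ * Bᵀ - Bᵀ) * (Δ * Δ₁ * Bᵀ - Bᵀ)ᴴ = 0 := by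
      rw [Matrix.conjTranspose_eq_transpose_of_trivial]
      have e1 : Δ * Δ₁ * Bᵀ * (B * Δ₁ᵀ * Δ) = Δ := by
        calc Δ * Δ₁ * Bᵀ * (B * Δ₁ᵀ * Δ)
            = Δ * Δ₁ * (Bᵀ * B) * (Δ₁ᵀ * Δ) := by
              simp only [Matrix.mul_assoc]
          _ = Δ * Δ₁ * Δ * (Δ₁ᵀ * Δ) := by rw [hB]
          _ = Δ * Δ₁ᵀ * Δ := by rw [hΔ₁, Matrix.mul_assoc]
          _ = Δ := hΔ₁'
      have e2 : Δ * Δ₁ * Bᵀ * B = Δ := by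
        rw [Matrix.mul_assoc (Δ * Δ₁), hB, hΔ₁]
      have e3 : Bᵀ * (B * Δ₁ᵀ * Δ) = Δ := by
        rw [← Matrix.mul_assoc, ← Matrix.mul_assoc, hB, hΔ₁']
      have ht : (Δ * Δ₁ * Bᵀ - Bᵀ)ᵀ = B * Δ₁ᵀ * Δ - B := by
        simp only [Matrix.transpose_sub, Matrix.transpose_mul, Matrix.transpose_transpose,
          hΔsym, Matrix.mul_assoc]
      rw [ht, Matrix.mul_sub, Matrix.sub_mul, Matrix.sub_mul, e1, e2, e3, hB]
      abel
    exact sub_eq_zero.mp (Matrix.self_mul_conjTranspose_eq_zero.mp h0)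
  -- vector consequences
  have hΔx : Δ *ᵥ xhat = (Oᵀ * Q) *ᵥ r := by
    rw [hxhat]
    simp only [Matrix.mulVec_mulVec, ← hQ]
    have : Δ * (Δ₁ * (Oᵀ * Q)) = Oᵀ * Q := by
      rw [← Matrix.mul_assoc]; exact key
    rw [this]
  have hTf : T *ᵥ fhat = P *ᵥ r - P *ᵥ (O *ᵥ xhat) := by
    rw [hfhat, Matrix.mulVec_mulVec, ← hP, Matrix.mulVec_sub]
  have hsum : O *ᵥ xhat + T *ᵥ fhat = Q *ᵥ (O *ᵥ xhat) + P *ᵥ r := by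
    rw [hTf, hQ, Matrix.sub_mulVec, Matrix.one_mulVec]
    abel
  have h1 : Oᵀ *ᵥ (O *ᵥ xhat + T *ᵥ fhat) = Oᵀ *ᵥ r := by
    have t1 : Oᵀ *ᵥ (Q *ᵥ (O *ᵥ xhat)) = Oᵀ *ᵥ (Q *ᵥ r) := by
      simp only [Matrix.mulVec_mulVec]
      rw [← Matrix.mul_assoc, ← hΔ, hΔx]
    have t2 : Q *ᵥ r + P *ᵥ r = r := by
      rw [hQ, Matrix.sub_mulVec, Matrix.one_mulVec]
      abel
    rw [hsum, Matrix.mulVec_add, t1, ← Matrix.mulVec_add, t2]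
  have h2 : Tᵀ *ᵥ (O *ᵥ xhat + T *ᵥ fhat) = Tᵀ *ᵥ r := by
    have t2 : Tᵀ *ᵥ (Q *ᵥ (O *ᵥ xhat)) = 0 := by
      rw [Matrix.mulVec_mulVec, hTtQ, Matrix.zero_mulVec]
    rw [hsum, Matrix.mulVec_add, t2, zero_add, Matrix.mulVec_mulVec, hTtP]
  refine ⟨h1, h2, ?_⟩
  -- minimization
  intro x f
  set ρ : Fin m → ℝ := r - O *ᵥ xhat - T *ᵥ fhat with hρ
  have hOρ : Oᵀ *ᵥ ρ = 0 := by
    rw [hρ, sub_sub, Matrix.mulVec_sub, h1, sub_self]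
  have hTρ : Tᵀ *ᵥ ρ = 0 := by
    rw [hρ, sub_sub, Matrix.mulVec_sub, h2, sub_self]
  set w : Fin m → ℝ := O *ᵥ (xhat - x) + T *ᵥ (fhat - f) with hw
  have hdecomp : r - O *ᵥ x - T *ᵥ f = ρ + w := by
    rw [hρ, hw, Matrix.mulVec_sub, Matrix.mulVec_sub]
    abel
  have hρw : ρ ⬝ᵥ w = 0 := by
    rw [hw, dotProduct_add, dotProduct_mulVec, dotProduct_mulVec,
      ← Matrix.mulVec_transpose, ← Matrix.mulVec_transpose, hOρ, hTρ,
      zero_dotProduct, zero_dotProduct, add_zero]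
  have hww : (0:ℝ) ≤ w ⬝ᵥ w := by
    apply Finset.sum_nonneg
    intro i _
    exact mul_self_nonneg _
  rw [hdecomp]
  clear_value ρ w
  have expand : (ρ + w) ⬝ᵥ (ρ + w) = ρ ⬝ᵥ ρ + 2 * (ρ ⬝ᵥ w) + w ⬝ᵥ w := by
    simp only [add_dotProduct, dotProduct_add, dotProduct_comm w ρ]
    ring
  rw [expand, hρw]
  linarith
end
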